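/- For all x ∈ ℝ and all μ ∈ ℝ, the partial derivative of f_μ(x) with respect to μ equals ((x−μ)/σ²)·f_μ(x) + f_μ(x)·Σ_{i=1}^k (h(b_i) − h(a_i)). -/

import Mathlib

open MeasureTheory ProbabilityTheory Set Filter Topology

noncomputable def stdphi (x : ℝ) : ℝ := Real.exp (-(x ^ 2) / 2) / Real.sqrt (2 * Real.pi)

noncomputable def stdPhi (x : ℝ) : ℝ := ∫ t in Iic x, stdphi t

noncomputable def stdPhiInv : ℝ → ℝ := Function.invFun stdPhi

noncomputable def stdPhiE (c : EReal) (x s : ℝ) : ℝ :=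
  if c = ⊤ then 1 else if c = ⊥ then 0 else stdPhi ((c.toReal - x) / s)

def truncOrdered {k : ℕ} (a b : Fin k → EReal) : Prop :=
  (∀ i, a i < b i) ∧ ∀ i j : Fin k, i < j → b i < a j

def truncSet {k : ℕ} (a b : Fin k → EReal) : Set ℝ :=
  {x : ℝ | ∃ i, a i < (x : EReal) ∧ (x : EReal) < b i}

noncomputable def truncSum {k : ℕ} (a b : Fin k → EReal) (s x : ℝ) : ℝ :=
  ∑ i, (stdPhiE (b i) x s - stdPhiE (a i) x s)

noncomputable def condPDF {k : ℕ} (a b : Fin k → EReal) (σ τ μ x : ℝ) : ℝ :=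
  (1 / σ) * stdphi ((x - μ) / σ) * truncSum a b τ x
    / truncSum a b (Real.sqrt (σ ^ 2 + τ ^ 2)) μ

noncomputable def Fmu {k : ℕ} (a b : Fin k → EReal) (σ τ μ x : ℝ) : ℝ :=
  ∫ u in Iic x, condPDF a b σ τ μ u

/-- `G_μ(x,v) = Φ((x - (ρ²μ + (1-ρ²)v))/(σρ))` with `ρ² = τ²/(σ²+τ²)`. -/
noncomputable def Gfun (σ τ μ x v : ℝ) : ℝ :=
  stdPhi ((x - (τ ^ 2 / (σ ^ 2 + τ ^ 2) * μ + (1 - τ ^ 2 / (σ ^ 2 + τ ^ 2)) * v)) /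
    (σ * Real.sqrt (τ ^ 2 / (σ ^ 2 + τ ^ 2))))

/-- `G_μ(x,v)` for an extended-real `v`, with the natural conventions at `±∞`. -/
noncomputable def GfunE (σ τ μ x : ℝ) (c : EReal) : ℝ :=
  if c = ⊤ then 0 else if c = ⊥ then 1 else Gfun σ τ μ x c.toReal

/-- `h(v)` from Lemma `le_dmu_formula`. -/
noncomputable def hfun {k : ℕ} (a b : Fin k → EReal) (σ τ μ v : ℝ) : ℝ :=
  (1 / Real.sqrt (σ ^ 2 + τ ^ 2)) * stdphi ((v - μ) / Real.sqrt (σ ^ 2 + τ ^ 2)) /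
    truncSum a b (Real.sqrt (σ ^ 2 + τ ^ 2)) μ

/-- `h(v)` for an extended-real `v`, with the convention `φ(±∞) = 0`. -/
noncomputable def hfunE {k : ℕ} (a b : Fin k → EReal) (σ τ μ : ℝ) (c : EReal) : ℝ :=
  if c = ⊤ then 0 else if c = ⊥ then 0 else hfun a b σ τ μ c.toReal

/-- `l(x,v)` from Lemma `le_dens_dx`. -/
noncomputable def lfun {k : ℕ} (a b : Fin k → EReal) (τ x v : ℝ) : ℝ :=
  (1 / τ) * stdphi ((v - x) / τ) / truncSum a b τ x

/-- `l(x,v)` for an extended-real `v`, with the convention `φ(±∞) = 0`. -/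
noncomputable def lfunE {k : ℕ} (a b : Fin k → EReal) (τ x : ℝ) (c : EReal) : ℝ :=
  if c = ⊤ then 0 else if c = ⊥ then 0 else lfun a b τ x c.toReal

/-- The function `B_μ(x)` from the proof of Proposition 1. -/
noncomputable def Bfun {k : ℕ} (a b : Fin k → EReal) (σ τ μ x : ℝ) : ℝ :=
  Real.sqrt (τ ^ 2 / (σ ^ 2 + τ ^ 2)) / σ * stdphi (stdPhiInv (Fmu a b σ τ μ x))
    - condPDF a b σ τ μ x
    + ∑ i, (hfunE a b σ τ μ (b i) * (Fmu a b σ τ μ x - GfunE σ τ μ x (b i))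
        - hfunE a b σ τ μ (a i) * (Fmu a b σ τ μ x - GfunE σ τ μ x (a i)))


lemma stdphi_pos (x : ℝ) : 0 < stdphi x :=
  div_pos (Real.exp_pos _) (Real.sqrt_pos.mpr (by positivity))

lemma continuous_stdphi : Continuous stdphi := by
  unfold stdphi; fun_prop

lemma integrable_stdphi : MeasureTheory.Integrable stdphi := by
  have h : MeasureTheory.Integrable (fun x : ℝ => Real.exp (-(2⁻¹ : ℝ) * x ^ 2)) :=
    integrable_exp_neg_mul_sq (by norm_num)
  refine (h.div_const (Real.sqrt (2 * Real.pi))).congr (Filter.Eventually.of_forall fun x => ?_)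
  unfold stdphi; ring_nf

lemma integral_stdphi : ∫ x, stdphi x = 1 := by
  have h : ∫ x : ℝ, Real.exp (-(2⁻¹ : ℝ) * x ^ 2) = Real.sqrt (2 * Real.pi) := by
    rw [integral_gaussian]; congr 1; ring
  have h2 : ∫ x, stdphi x = (∫ x : ℝ, Real.exp (-(2⁻¹ : ℝ) * x ^ 2)) / Real.sqrt (2 * Real.pi) := by
    rw [← integral_div]
    congr 1 with x
    unfold stdphi; ring_nf
  rw [h2, h, div_self (Real.sqrt_pos.mpr (by positivity)).ne']

lemma stdPhi_eq_aux (y : ℝ) : stdPhi y = stdPhi 0 + ∫ t in (0:ℝ)..y, stdphi t := by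
  have := intervalIntegral.integral_Iic_sub_Iic (f := stdphi) (μ := volume) (a := 0) (b := y)
    integrable_stdphi.integrableOn integrable_stdphi.integrableOn
  unfold stdPhi; linarith

lemma hasDerivAt_stdPhi (x : ℝ) : HasDerivAt stdPhi (stdphi x) x := by
  have h : HasDerivAt (fun y => stdPhi 0 + ∫ t in (0:ℝ)..y, stdphi t) (stdphi x) x :=
    (intervalIntegral.integral_hasDerivAt_right
      integrable_stdphi.intervalIntegrable
      (continuous_stdphi.stronglyMeasurableAtFilter _ _)
      continuous_stdphi.continuousAt).const_add _
  exact h.congr_of_eventuallyEq (Filter.Eventually.of_forall fun y => (stdPhi_eq_aux y))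

lemma stdPhi_strictMono : StrictMono stdPhi := by
  intro u v huv
  have h : stdPhi v - stdPhi u = ∫ t in u..v, stdphi t := by
    have := intervalIntegral.integral_Iic_sub_Iic (f := stdphi) (μ := volume) (a := u) (b := v)
      integrable_stdphi.integrableOn integrable_stdphi.integrableOn
    unfold stdPhi; linarith
  have hpos : 0 < ∫ t in u..v, stdphi t :=
    intervalIntegral.intervalIntegral_pos_of_pos_on
      integrable_stdphi.intervalIntegrable (fun t _ => stdphi_pos t) huv
  linarith

lemma stdPhi_pos (x : ℝ) : 0 < stdPhi x := by
  unfold stdPhi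
  rw [MeasureTheory.setIntegral_pos_iff_support_of_nonneg_ae
    (Filter.Eventually.of_forall fun t => (stdphi_pos t).le) integrable_stdphi.integrableOn]
  have hsupp : Function.support stdphi = univ := by
    ext t; simp [Function.mem_support, (stdphi_pos t).ne']
  rw [hsupp, univ_inter]
  simp [Real.volume_Iic]

lemma stdPhi_lt_one (x : ℝ) : stdPhi x < 1 := by
  have hIoi : 0 < ∫ t in Ioi x, stdphi t := by
    rw [MeasureTheory.setIntegral_pos_iff_support_of_nonneg_ae
      (Filter.Eventually.of_forall fun t => (stdphi_pos t).le) integrable_stdphi.integrableOn]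
    have hsupp : Function.support stdphi = univ := by
      ext t; simp [Function.mem_support, (stdphi_pos t).ne']
    rw [hsupp, univ_inter]
    simp [Real.volume_Ioi]
  have := intervalIntegral.integral_Iic_add_Ioi (f := stdphi) (μ := volume) (b := x)
    integrable_stdphi.integrableOn integrable_stdphi.integrableOn
  rw [integral_stdphi] at this
  unfold stdPhi; linarith

lemma hasDerivAt_stdphi (y : ℝ) : HasDerivAt stdphi (-y * stdphi y) y := by
  unfold stdphi
  have h1 : HasDerivAt (fun t : ℝ => -(t ^ 2) / 2) (-y) y := by
    have := ((hasDerivAt_pow 2 y).neg).div_const 2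
    refine this.congr_deriv ?_
    simp; ring
  have h2 := (h1.exp).div_const (Real.sqrt (2 * Real.pi))
  refine h2.congr_deriv ?_
  ring

noncomputable def dPhiE (c : EReal) (x s : ℝ) : ℝ :=
  if c = ⊤ then 0 else if c = ⊥ then 0 else -(1 / s) * stdphi ((c.toReal - x) / s)

lemma hasDerivAt_stdPhiE (c : EReal) (s : ℝ) (μ : ℝ) :
    HasDerivAt (fun m => stdPhiE c m s) (dPhiE c μ s) μ := by
  rcases eq_or_ne c ⊤ with h | h
  · simpa [stdPhiE, dPhiE, h] using hasDerivAt_const μ (1 : ℝ)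
  rcases eq_or_ne c ⊥ with h' | h'
  · simpa [stdPhiE, dPhiE, h, h'] using hasDerivAt_const μ (0 : ℝ)
  simp only [stdPhiE, dPhiE, h, h', if_false]
  have h1 : HasDerivAt (fun m : ℝ => (c.toReal - m) / s) (-(1 / s)) μ := by
    have := ((hasDerivAt_id μ).const_sub c.toReal).div_const s
    simpa [neg_div] using this
  have h2 := (hasDerivAt_stdPhi ((c.toReal - μ) / s)).comp μ h1
  refine h2.congr_deriv ?_
  ring

lemma hasDerivAt_truncSum {k : ℕ} (a b : Fin k → EReal) (s : ℝ) (μ : ℝ) :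
    HasDerivAt (fun m => truncSum a b s m)
      (∑ i, (dPhiE (b i) μ s - dPhiE (a i) μ s)) μ := by
  unfold truncSum
  exact HasDerivAt.fun_sum fun i _ =>
    (hasDerivAt_stdPhiE (b i) s μ).sub (hasDerivAt_stdPhiE (a i) s μ)

lemma stdPhiE_lt_stdPhiE {c d : EReal} (h : c < d) (μ : ℝ) {s : ℝ} (hs : 0 < s) :
    stdPhiE c μ s < stdPhiE d μ s := by
  have hc : c ≠ ⊤ := h.ne_top
  have hd : d ≠ ⊥ := h.ne_bot
  unfold stdPhiE
  rcases eq_or_ne c ⊥ with hcb | hcb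
  · rcases eq_or_ne d ⊤ with hdt | hdt
    · simp [hcb, hdt]
    · simpa [hcb, hdt, hd] using stdPhi_pos _
  · rcases eq_or_ne d ⊤ with hdt | hdt
    · simpa [hc, hcb, hdt] using stdPhi_lt_one _
    · simp only [hc, hcb, hdt, hd, if_false]
      apply stdPhi_strictMono
      have hlt : (c.toReal : EReal) < (d.toReal : EReal) := by
        rwa [EReal.coe_toReal hc hcb, EReal.coe_toReal hdt hd]
      have hlt' : c.toReal < d.toReal := by exact_mod_cast hlt
      gcongr

lemma truncSum_pos {k : ℕ} (a b : Fin (k + 1) → EReal) (hab : truncOrdered a b)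
    {s : ℝ} (hs : 0 < s) (μ : ℝ) : 0 < truncSum a b s μ :=
  Finset.sum_pos (fun i _ => sub_pos.mpr (stdPhiE_lt_stdPhiE (hab.1 i) μ hs))
    ⟨0, Finset.mem_univ 0⟩

/-- Lemma (`le_dens_dmu`): `∂f_μ(x)/∂μ = ((x-μ)/σ²) f_μ(x) + f_μ(x) ∑ᵢ (h(bᵢ) - h(aᵢ))`. -/
theorem stmt15 {k : ℕ} (a b : Fin (k + 1) → EReal) (hab : truncOrdered a b)
    (σ τ : ℝ) (hσ : 0 < σ) (hτ : 0 < τ) (x μ : ℝ) :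
    HasDerivAt (fun m => condPDF a b σ τ m x)
      ((x - μ) / σ ^ 2 * condPDF a b σ τ μ x
        + condPDF a b σ τ μ x * ∑ i, (hfunE a b σ τ μ (b i) - hfunE a b σ τ μ (a i))) μ :=  by
  have hσ' : σ ≠ 0 := hσ.ne'
  have hss : (0:ℝ) < σ ^ 2 + τ ^ 2 := by positivity
  set s := Real.sqrt (σ ^ 2 + τ ^ 2) with hsdef
  have hs : 0 < s := Real.sqrt_pos.mpr hss
  have hD : 0 < truncSum a b s μ := truncSum_pos a b hab hs μ
  have hφ : HasDerivAt (fun m : ℝ => stdphi ((x - m) / σ))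
      ((x - μ) / σ ^ 2 * stdphi ((x - μ) / σ)) μ := by
    have h1 : HasDerivAt (fun m : ℝ => (x - m) / σ) (-(1 / σ)) μ := by
      simpa [neg_div] using ((hasDerivAt_id μ).const_sub x).div_const σ
    have h2 := (hasDerivAt_stdphi ((x - μ) / σ)).comp μ h1
    refine h2.congr_deriv ?_
    field_simp
  have hN : HasDerivAt
      (fun m : ℝ => 1 / σ * stdphi ((x - m) / σ) * truncSum a b τ x)
      (1 / σ * ((x - μ) / σ ^ 2 * stdphi ((x - μ) / σ)) * truncSum a b τ x) μ :=
    (hφ.const_mul (1 / σ)).mul_const _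
  have hDder := hasDerivAt_truncSum a b s μ
  have hdiv := hN.div hDder hD.ne'
  have key : ∀ c : EReal, dPhiE c μ s = -(truncSum a b s μ * hfunE a b σ τ μ c) := by
    intro c
    unfold dPhiE hfunE hfun
    rcases eq_or_ne c ⊤ with h | h
    · simp [h]
    rcases eq_or_ne c ⊥ with h' | h'
    · simp [h, h']
    simp only [h, h', if_false]
    rw [← hsdef]
    field_simp
  have hptwise : ∀ i : Fin (k + 1),
      dPhiE (b i) μ s - dPhiE (a i) μ s
        = -(truncSum a b s μ * (hfunE a b σ τ μ (b i) - hfunE a b σ τ μ (a i))) := by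
    intro i; rw [key (b i), key (a i)]; ring
  have hDS : (∑ i, (dPhiE (b i) μ s - dPhiE (a i) μ s))
      = -(truncSum a b s μ * ∑ i, (hfunE a b σ τ μ (b i) - hfunE a b σ τ μ (a i))) := by
    simp only [hptwise, Finset.sum_neg_distrib, Finset.mul_sum]
  simp only [condPDF, ← hsdef]
  refine hdiv.congr_deriv ?_
  rw [hDS]
  field_simp
  ring
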